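/- Let r ≥ 1 be odd and let k ≥ 2 be an integer. Then there exists a coloring χ : {1,…,kr−r−1} → ℤ/rℤ that admits no r-zero-sum solution to the equation E; equivalently, S_z(k,r) ≥ kr − r. -/

import Mathlib

/-- `hasZeroSumSolution k r N χ` says the coloring `χ` of `{1,…,N}` by `ZMod r`
admits an `r`-zero-sum solution to `x₁ + ⋯ + x_{k-1} = x_k`. -/
def hasZeroSumSolution (k r N : ℕ) (χ : ℕ → ZMod r) : Prop :=
  ∃ (x : Fin (k - 1) → ℕ) (y : ℕ),
    (∀ i, 1 ≤ x i ∧ x i ≤ N) ∧ (1 ≤ y ∧ y ≤ N) ∧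
    (∑ i, x i) = y ∧
    (∑ i, χ (x i)) + χ y = 0

/-- Arithmetic endgame, case where `y` is "large". -/
private lemma zss_aux_large (r k m qy ρy Q A S t s : ℤ)
    (hr : 3 ≤ r) (hkm : k = r * m) (hm : 1 ≤ m)
    (hQ : 0 ≤ Q) (hs : 0 ≤ s) (hρy0 : 0 ≤ ρy)
    (hG1 : t * (k - 1) ≤ Q + m * S) (hG2 : S ≤ A) (hG3 : S ≤ t * (r - 1))
    (hstar : (k - 1) + r * Q + A = 1 + r * qy + ρy)
    (hqy : qy ≤ k - 2) (hρy : ρy ≤ r - 1)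
    (hSval : S = r * s + 1)
    (hy : 1 + r * qy + ρy ≤ k * r - r - 1) : False := by
  have hk : 3 ≤ k := by nlinarith
  have htb : s + 1 ≤ t := by
    by_contra hcon
    push_neg at hcon
    have h1 : t * (r - 1) ≤ s * (r - 1) :=
      mul_le_mul_of_nonneg_right (by linarith) (by linarith)
    linarith
  have e1 : r * (t * (k - 1)) ≤ r * (Q + m * S) :=
    mul_le_mul_of_nonneg_left hG1 (by linarith)
  have e2 : r * ((s + 1) * (k - 1)) ≤ r * (t * (k - 1)) := by
    refine mul_le_mul_of_nonneg_left ?_ (by linarith)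
    exact mul_le_mul_of_nonneg_right htb (by linarith)
  have e3 : r * (Q + m * S) = r * Q + k * S := by rw [hkm]; ring
  have key : r * ((s + 1) * (k - 1)) ≤ 1 + r * qy + ρy - (k - 1) - S + k * S := by
    have h4 : r * Q = 1 + r * qy + ρy - (k - 1) - A := by linarith
    linarith [e1, e2, e3.symm ▸ e1]
  have h7 : 1 + r * qy + ρy - (k - 1) - S + k * S
      = 1 + r * qy + ρy - (k - 1) + (k - 1) * (r * s + 1) := by
    rw [← hSval]; ring
  rw [h7] at key
  have e8 : r * (k - 1) ≤ r * qy + ρy + 1 := by linarith [key]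
  have f1 : r * qy ≤ r * (k - 2) := mul_le_mul_of_nonneg_left hqy (by linarith)
  have f2 : r - 1 ≤ ρy := by linarith
  have hρyv : ρy = r - 1 := le_antisymm hρy f2
  have f3 : r * (k - 2) ≤ r * qy := by
    have : r * (k - 1) ≤ r * qy + r := by rw [hρyv] at e8; linarith
    linarith
  linarith [hy, f3, hρyv]

/-- Arithmetic endgame, case where `y` is "small" and `S ≥ 1`. -/
private lemma zss_aux_small (r k m qy ρy Q A S t s : ℤ)
    (hr : 3 ≤ r) (hkm : k = r * m) (hm : 1 ≤ m)
    (hQ : 0 ≤ Q) (hs : 0 ≤ s) (hρy0 : 0 ≤ ρy)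
    (hG1 : t * (k - 1) ≤ Q + m * S) (hG2 : S ≤ A) (hG3 : S ≤ t * (r - 1))
    (hstar : (k - 1) + r * Q + A = 1 + r * qy + ρy)
    (hwy : qy + m * ρy ≤ k - 2) (hρy : ρy ≤ r - 1)
    (hSval : S = r * s + ρy + 1) : False := by
  have hk : 3 ≤ k := by nlinarith
  have htb : s + 1 ≤ t := by
    by_contra hcon
    push_neg at hcon
    have h1 : t * (r - 1) ≤ s * (r - 1) :=
      mul_le_mul_of_nonneg_right (by linarith) (by linarith)
    linarith
  have e1 : r * (t * (k - 1)) ≤ r * (Q + m * S) :=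
    mul_le_mul_of_nonneg_left hG1 (by linarith)
  have e2 : r * ((s + 1) * (k - 1)) ≤ r * (t * (k - 1)) := by
    refine mul_le_mul_of_nonneg_left ?_ (by linarith)
    exact mul_le_mul_of_nonneg_right htb (by linarith)
  have e3 : r * (Q + m * S) = r * Q + k * S := by rw [hkm]; ring
  have key : r * ((s + 1) * (k - 1)) ≤ 1 + r * qy + ρy - (k - 1) - S + k * S := by
    have h4 : r * Q = 1 + r * qy + ρy - (k - 1) - A := by linarith
    linarith [e1, e2, e3.symm ▸ e1]
  have h7 : 1 + r * qy + ρy - (k - 1) - S + k * S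
      = 1 + r * qy + ρy - (k - 1) + (k - 1) * (r * s + ρy + 1) := by
    rw [← hSval]; ring
  rw [h7] at key
  have e8 : r * (k - 1) ≤ r * qy + k * ρy + 1 := by linarith [key]
  have f1 : r * (qy + m * ρy) ≤ r * (k - 2) := mul_le_mul_of_nonneg_left hwy (by linarith)
  have f2 : r * qy + k * ρy = r * (qy + m * ρy) := by rw [hkm]; ring
  linarith

/-- Arithmetic endgame, case where `y` is "small" and `S = 0`. -/
private lemma zss_aux_small0 (r k m qy ρy Q A : ℤ)
    (hr : 3 ≤ r) (hkm : k = r * m) (hm : 1 ≤ m)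
    (hQ : 0 ≤ Q) (hA : 0 ≤ A)
    (hstar : (k - 1) + r * Q + A = 1 + r * qy + ρy)
    (hwy : qy + m * ρy ≤ k - 2)
    (hρyv : ρy = r - 1) : False := by
  have f0 : m * ρy = m * r - m := by rw [hρyv]; ring
  have hqym : qy ≤ m - 2 := by
    have : qy + (m * r - m) ≤ k - 2 := by rw [← f0]; exact hwy
    nlinarith
  have f1 : r * qy ≤ r * (m - 2) := mul_le_mul_of_nonneg_left hqym (by linarith)
  have f2 : r * (m - 2) = k - 2 * r := by rw [hkm]; ring
  have f3 : 0 ≤ r * Q := mul_nonneg (by linarith) hQ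
  linarith

set_option maxHeartbeats 2000000 in
theorem zero_sum_schur_lower_odd (r k : ℕ) (hr1 : 1 ≤ r) (hodd : Odd r) (hk : 2 ≤ k) :
    ∃ χ : ℕ → ZMod r, ¬ hasZeroSumSolution k r (k * r - r - 1) χ := by
  have hNZ : NeZero r := ⟨by omega⟩
  have hsumge : ∀ (x : Fin (k-1) → ℕ), (∀ i, 1 ≤ x i) → k - 1 ≤ ∑ i, x i := by
    intro x hx
    calc k - 1 = ∑ _i : Fin (k-1), 1 := by simp
    _ ≤ ∑ i, x i := Finset.sum_le_sum fun i _ => hx i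
  rcases eq_or_ne r 1 with rfl | hrne1
  · -- r = 1 : there are no solutions at all for size reasons
    refine ⟨fun _ => 0, ?_⟩
    rintro ⟨x, y, hx, hy, hsum, -⟩
    have h1 : k - 1 ≤ ∑ i, x i := hsumge x fun i => (hx i).1
    have h2 : y ≤ k * 1 - 1 - 1 := hy.2
    omega
  have hr3 : 3 ≤ r := by rcases hodd with ⟨j, hj⟩; omega
  by_cases hdvd : r ∣ k
  · -- main case : r ∣ k
    obtain ⟨m, hm⟩ := hdvd
    have hm1 : 1 ≤ m := by
      rcases Nat.eq_zero_or_pos m with h | h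
      · rw [h, Nat.mul_zero] at hm; omega
      · exact h
    have hk3 : 3 ≤ k := by
      calc 3 = 3 * 1 := rfl
      _ ≤ r * m := Nat.mul_le_mul hr3 hm1
      _ = k := hm.symm
    set ρ : ℕ → ℕ := fun z => (z - 1) % r with hρdef
    set q : ℕ → ℕ := fun z => (z - 1) / r with hqdef
    refine ⟨fun z => if k - 1 ≤ q z + m * ρ z then -((ρ z : ZMod r))
        else ((ρ z : ZMod r)), ?_⟩
    rintro ⟨x, y, hx, hy, hsum, hzero⟩
    dsimp only at hzero
    have hρlt : ∀ z, ρ z < r := fun z => Nat.mod_lt _ (by omega)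
    have hz : ∀ z : ℕ, 1 ≤ z → z = 1 + r * q z + ρ z := by
      intro z hz1
      have := Nat.div_add_mod (z - 1) r
      simp only [hρdef, hqdef]
      omega
    set A : ℕ := ∑ i, ρ (x i) with hA
    set Q : ℕ := ∑ i, q (x i) with hQ
    -- the fundamental counting identity
    have hstar : (k - 1) + r * Q + A = 1 + r * q y + ρ y := by
      have h1 : ∑ i, x i = ∑ i, (1 + r * q (x i) + ρ (x i)) :=
        Finset.sum_congr rfl fun i _ => hz (x i) (hx i).1
      have h2 : ∑ i, (1 + r * q (x i) + ρ (x i))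
          = (k - 1) + r * Q + A := by
        rw [Finset.sum_add_distrib, Finset.sum_add_distrib, ← Finset.mul_sum]
        simp [hA, hQ]
      have h3 := hz y hy.1
      omega
    -- the set of "large" indices
    set Λ : Finset (Fin (k-1)) := Finset.univ.filter
        (fun i => k - 1 ≤ q (x i) + m * ρ (x i)) with hΛ
    set t : ℕ := Λ.card with ht
    set S : ℕ := ∑ i ∈ Λ, ρ (x i) with hS
    set T : ℕ := S + (if k - 1 ≤ q y + m * ρ y then ρ y else 0) with hT
    -- from the zero-sum hypothesis, T ≡ ρ y + 1 (mod r)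
    have hmod : T ≡ ρ y + 1 [MOD r] := by
      have h1 : (∑ i, (if k - 1 ≤ q (x i) + m * ρ (x i) then -((ρ (x i) : ZMod r))
            else ((ρ (x i) : ZMod r))))
          = ((A : ℕ) : ZMod r) - 2 * ((S : ℕ) : ZMod r) := by
        calc (∑ i, (if k - 1 ≤ q (x i) + m * ρ (x i) then -((ρ (x i) : ZMod r))
              else ((ρ (x i) : ZMod r))))
            = ∑ i, (((ρ (x i) : ZMod r))
              - 2 * (if k - 1 ≤ q (x i) + m * ρ (x i) then ((ρ (x i) : ZMod r)) else 0)) :=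
              Finset.sum_congr rfl (fun i _ => by split_ifs <;> ring)
          _ = (∑ i, ((ρ (x i) : ZMod r)))
              - 2 * ∑ i, (if k - 1 ≤ q (x i) + m * ρ (x i) then ((ρ (x i) : ZMod r)) else 0) := by
              rw [Finset.sum_sub_distrib, Finset.mul_sum]
          _ = ((A : ℕ) : ZMod r) - 2 * ((S : ℕ) : ZMod r) := by
              rw [hA, hS, Nat.cast_sum, Finset.sum_filter]
              norm_cast
      rw [h1] at hzero
      -- A ≡ ρ y + 2  (mod r)
      have hk0 : ((k : ℕ) : ZMod r) = 0 := by
        rw [ZMod.natCast_eq_zero_iff]; exact ⟨m, hm⟩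
      have hAc : ((A : ℕ) : ZMod r) = ((ρ y : ℕ) : ZMod r) + 2 := by
        have h2 := congrArg (Nat.cast : ℕ → ZMod r) hstar
        push_cast at h2
        have hk1 : ((k - 1 : ℕ) : ZMod r) = ((k : ℕ) : ZMod r) - 1 := by
          rw [Nat.cast_sub (by omega : 1 ≤ k)]; push_cast; ring
        rw [ZMod.natCast_self] at h2
        have hk1' : ((k - 1 : ℕ) : ZMod r) = -1 := by rw [hk1, hk0]; ring
        rw [hk1'] at h2
        linear_combination h2
      have h2T : (2 : ZMod r) * ((T : ℕ) : ZMod r) = 2 * ((ρ y + 1 : ℕ) : ZMod r) := by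
        have hTc : ((T : ℕ) : ZMod r)
            = ((S : ℕ) : ZMod r) + (if k - 1 ≤ q y + m * ρ y then ((ρ y : ℕ) : ZMod r) else 0) := by
          rw [hT]
          push_cast [apply_ite (Nat.cast : ℕ → ZMod r)]
          rfl
        rw [hTc]
        push_cast
        split_ifs at hzero ⊢ with hcond
        · linear_combination hAc - hzero
        · linear_combination hAc - hzero
      have hu : IsUnit (2 : ZMod r) := by
        rw [show ((2 : ZMod r)) = ((2 : ℕ) : ZMod r) by push_cast; ring,
          ZMod.isUnit_iff_coprime]
        exact Nat.coprime_two_left.mpr hodd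
      exact (ZMod.natCast_eq_natCast_iff _ _ _).mp (hu.mul_left_cancel h2T)
    -- combinatorial inequalities over ℕ
    have hG1 : t * (k - 1) ≤ Q + m * S := by
      have h1 : t * (k - 1) = ∑ _i ∈ Λ, (k - 1) := by
        rw [Finset.sum_const, smul_eq_mul]
      have h2 : ∑ _i ∈ Λ, (k - 1) ≤ ∑ i ∈ Λ, (q (x i) + m * ρ (x i)) :=
        Finset.sum_le_sum fun i hi => (Finset.mem_filter.mp hi).2
      have h3 : ∑ i ∈ Λ, (q (x i) + m * ρ (x i))
          = (∑ i ∈ Λ, q (x i)) + m * S := by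
        rw [Finset.sum_add_distrib, ← Finset.mul_sum, hS]
      have h4 : ∑ i ∈ Λ, q (x i) ≤ Q :=
        Finset.sum_le_sum_of_subset (Finset.filter_subset _ _)
      omega
    have hG2 : S ≤ A :=
      Finset.sum_le_sum_of_subset (Finset.filter_subset _ _)
    have hG3 : S ≤ t * (r - 1) := by
      calc S ≤ ∑ _i ∈ Λ, (r - 1) := Finset.sum_le_sum fun i _ => by
              have := hρlt (x i); omega
      _ = t * (r - 1) := by rw [Finset.sum_const, smul_eq_mul]
    have h2r : 2 * r ≤ k * r := Nat.mul_le_mul_right r hk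
    have hqy : q y ≤ k - 2 := by
      have h1 : q y * r ≤ y - 1 := Nat.div_mul_le_self _ _
      have h2 : y ≤ k * r - r - 1 := hy.2
      by_contra hcon
      push_neg at hcon
      have h5 : (k - 1) * r ≤ q y * r := Nat.mul_le_mul_right r (by omega)
      have h6 : (k - 1) * r + r = k * r := by
        have h7 : (k - 1) * r = k * r - 1 * r := Nat.sub_mul k 1 r
        rw [one_mul] at h7
        omega
      omega
    have hρylt : ρ y < r := hρlt y
    have hyval := hz y hy.1
    have hyub : y ≤ k * r - r - 1 := hy.2
    -- integer versions
    have hkZ : (k : ℤ) = r * m := by exact_mod_cast hm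
    have hG1Z : (t : ℤ) * ((k : ℤ) - 1) ≤ (Q : ℤ) + m * S := by
      zify [show (1:ℕ) ≤ k by omega] at hG1; exact hG1
    have hG2Z : (S : ℤ) ≤ A := by exact_mod_cast hG2
    have hG3Z : (S : ℤ) ≤ (t : ℤ) * ((r : ℤ) - 1) := by
      zify [show (1:ℕ) ≤ r by omega] at hG3; exact hG3
    have hstarZ : ((k : ℤ) - 1) + r * Q + A = 1 + r * q y + ρ y := by
      zify [show (1:ℕ) ≤ k by omega] at hstar; exact hstar
    have hqyZ : (q y : ℤ) ≤ (k : ℤ) - 2 := by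
      zify [show (2:ℕ) ≤ k by omega] at hqy; exact hqy
    have hρyltZ : (ρ y : ℤ) ≤ (r : ℤ) - 1 := by
      have h : (ρ y : ℤ) < r := by exact_mod_cast hρylt
      omega
    have hyvalZ : (y : ℤ) = 1 + r * q y + ρ y := by exact_mod_cast hyval
    have hkrZ : ((k * r : ℕ) : ℤ) = (k : ℤ) * r := by push_cast; ring
    have hyubZ : (y : ℤ) ≤ (k : ℤ) * r - r - 1 := by omega
    have hrZ : (3 : ℤ) ≤ r := by exact_mod_cast hr3
    have hmZ : (1 : ℤ) ≤ m := by exact_mod_cast hm1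
    have htZ : (0 : ℤ) ≤ t := Int.natCast_nonneg _
    have hQZ : (0 : ℤ) ≤ Q := by positivity
    have hSZ : (0 : ℤ) ≤ S := by positivity
    have hρy0Z : (0 : ℤ) ≤ ρ y := by positivity
    clear hzero hsum hx hy
    by_cases hyL : k - 1 ≤ q y + m * ρ y
    · -- y is "large" : T = S + ρ y, hence S ≡ 1 (mod r)
      have hTS : T = S + ρ y := by rw [hT, if_pos hyL]
      have hmodS : S ≡ 1 [MOD r] := by
        rw [hTS] at hmod
        have h' : S + ρ y ≡ 1 + ρ y [MOD r] := by
          rw [Nat.add_comm 1 (ρ y)]; exact hmod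
        exact Nat.ModEq.add_right_cancel' (ρ y) h'
      obtain ⟨c, hc⟩ : (r : ℤ) ∣ 1 - (S : ℤ) := by
        have h := hmodS.dvd
        simpa using h
      have hc0 : c ≤ 0 := by
        by_contra hcon
        push_neg at hcon
        have h1 : (r : ℤ) * 1 ≤ r * c := by
          refine mul_le_mul_of_nonneg_left (by omega) (by linarith)
        linarith
      have hSval : (S : ℤ) = r * (-c) + 1 := by linarith [hc]
      exact zss_aux_large r k m (q y) (ρ y) Q A S t (-c) hrZ hkZ hmZ hQZ
        (by omega) hρy0Z hG1Z hG2Z hG3Z hstarZ hqyZ hρyltZ hSval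
        (by linarith [hyvalZ, hyubZ])
    · -- y is "small"
      have hTS : T = S := by rw [hT, if_neg hyL]; exact Nat.add_zero S
      rw [hTS] at hmod
      have hwyZ : (q y : ℤ) + m * ρ y ≤ (k : ℤ) - 2 := by
        push_neg at hyL
        have h := hyL
        zify [show (1:ℕ) ≤ k by omega] at h
        omega
      rcases Nat.eq_zero_or_pos S with hS0 | hS1
      · -- S = 0 : then ρ y = r - 1
        have h0 : (0 : ℕ) ≡ ρ y + 1 [MOD r] := hS0 ▸ hmod
        obtain ⟨c, hc⟩ : (r : ℤ) ∣ (ρ y : ℤ) + 1 := by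
          have h := h0.dvd
          simpa using h
        have hρyv : (ρ y : ℤ) = (r : ℤ) - 1 := by
          have hc1 : c = 1 := by
            rcases lt_trichotomy c 1 with h | h | h
            · exfalso
              have : (r : ℤ) * c ≤ r * 0 :=
                mul_le_mul_of_nonneg_left (by omega) (by linarith)
              linarith
            · exact h
            · exfalso
              have : (r : ℤ) * 2 ≤ r * c :=
                mul_le_mul_of_nonneg_left (by omega) (by linarith)
              linarith
          rw [hc1] at hc
          linarith
        have hAZ : (0 : ℤ) ≤ A := by positivity
        exact zss_aux_small0 r k m (q y) (ρ y) Q A hrZ hkZ hmZ hQZ hAZ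
          hstarZ hwyZ hρyv
      · -- S ≥ 1
        obtain ⟨c, hc⟩ : (r : ℤ) ∣ ((ρ y : ℤ) + 1) - S := by
          have h := hmod.dvd
          have h' : (r : ℤ) ∣ ((ρ y + 1 : ℕ) : ℤ) - (S : ℤ) := h
          push_cast at h'
          exact h'
        have hS1Z : (1 : ℤ) ≤ S := by exact_mod_cast hS1
        have hc0 : c ≤ 0 := by
          by_contra hcon
          push_neg at hcon
          have h1 : (r : ℤ) * 1 ≤ r * c :=
            mul_le_mul_of_nonneg_left (by omega) (by linarith)
          linarith
        have hSval : (S : ℤ) = r * (-c) + ρ y + 1 := by linarith [hc]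
        exact zss_aux_small r k m (q y) (ρ y) Q A S t (-c) hrZ hkZ hmZ hQZ
          (by omega) hρy0Z hG1Z hG2Z hG3Z hstarZ hwyZ hρyltZ hSval
  · -- r does not divide k : the constant coloring 1 works
    refine ⟨fun _ => 1, ?_⟩
    rintro ⟨x, y, hx, hy, hsum, hzero⟩
    have h1 : (∑ _i : Fin (k-1), (1 : ZMod r)) + 1 = ((k : ℕ) : ZMod r) := by
      rw [Finset.sum_const]
      simp only [Finset.card_univ, Fintype.card_fin, nsmul_eq_mul, mul_one]
      rw [show ((k - 1 : ℕ) : ZMod r) = ((k : ℕ) : ZMod r) - 1 by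
        rw [Nat.cast_sub (by omega : 1 ≤ k)]; push_cast; ring]
      ring
    rw [h1] at hzero
    exact hdvd ((ZMod.natCast_eq_zero_iff _ _).mp hzero)
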